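/- (Equivalence of forward and inverse hysteresis operators, multiple pinning forces.) Let E be a finite-dimensional real inner product space, let μ₀ > 0 and N ≥ 1, and for k = 1,…,N let m_k > 0, χ_k ≥ 0, J_{p,k} ∈ E, and let U_k : E → ℝ be continuous and m_k-strongly convex. Given H ∈ E, for each k let J_k* be the unique minimizer of J ↦ U_k(J) − ⟪H, J⟫ + χ_k‖J − J_{p,k}‖, and set B = μ₀ • H + Σ_{k=1}^{N} J_k*. Then the tuple (J_1*,…,J_N*) is the unique minimizer of (J_1,…,J_N) ↦ (1/(2μ₀))‖B − Σ_k J_k‖² + Σ_k ( U_k(J_k) + χ_k‖J_k − J_{p,k}‖ ), and consequently H = (1/μ₀)(B − Σ_k J_k*). -/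

import Mathlib

open RealInnerProductSpace

lemma norm_sub_const_convexOn {E : Type*} [NormedAddCommGroup E] [InnerProductSpace ℝ E]
    (c : E) : ConvexOn ℝ Set.univ (fun x : E => ‖x - c‖) := by
  refine ⟨convex_univ, ?_⟩
  intro x _ y _ a b ha hb hab
  have h1 : a • x + b • y - c = a • (x - c) + b • (y - c) := by
    have h2 : a • (x - c) + b • (y - c) = a • x + b • y - (a + b) • c := by
      rw [smul_sub, smul_sub, add_smul]; abel
    rw [h2, hab, one_smul]
  show ‖a • x + b • y - c‖ ≤ a * ‖x - c‖ + b * ‖y - c‖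
  rw [h1]
  calc ‖a • (x - c) + b • (y - c)‖ ≤ ‖a • (x - c)‖ + ‖b • (y - c)‖ := norm_add_le _ _
    _ = a * ‖x - c‖ + b * ‖y - c‖ := by
        rw [norm_smul, norm_smul, Real.norm_of_nonneg ha, Real.norm_of_nonneg hb]

lemma neg_inner_convexOn {E : Type*} [NormedAddCommGroup E] [InnerProductSpace ℝ E]
    (H : E) : ConvexOn ℝ Set.univ (fun x : E => -⟪H, x⟫) := by
  refine ⟨convex_univ, ?_⟩
  intro x _ y _ a b _ _ _
  apply le_of_eq
  simp [inner_add_right, real_inner_smul_right]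
  ring

lemma strict_min_unique {E : Type*} [AddCommGroup E] [Module ℝ E] {g : E → ℝ}
    (hg : StrictConvexOn ℝ Set.univ g) {a b : E}
    (ha : ∀ x, g a ≤ g x) (hb : ∀ x, g b ≤ g x) : a = b := by
  by_contra hne
  have h := hg.2 (Set.mem_univ a) (Set.mem_univ b) hne
    (by norm_num : (0:ℝ) < 1/2) (by norm_num : (0:ℝ) < 1/2) (by norm_num)
  have hab : g a = g b := le_antisymm (ha b) (hb a)
  have h2 := ha ((1/2 : ℝ) • a + (1/2 : ℝ) • b)
  rw [← hab] at h
  simp only [smul_eq_mul] at h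
  linarith

theorem forward_inverse_equivalence_multiple
    {E : Type*} [NormedAddCommGroup E] [InnerProductSpace ℝ E] [FiniteDimensional ℝ E]
    (μ₀ : ℝ) (hμ₀ : 0 < μ₀) (N : ℕ) (hN : 1 ≤ N)
    (m χ : Fin N → ℝ) (hm : ∀ k, 0 < m k) (hχ : ∀ k, 0 ≤ χ k)
    (Jp : Fin N → E)
    (U : Fin N → E → ℝ) (hUcont : ∀ k, Continuous (U k))
    (hUconv : ∀ k, StrongConvexOn Set.univ (m k) (U k))
    (H : E) (Jstar : Fin N → E)
    (hJstar : ∀ k, ∀ J : E,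
      U k (Jstar k) - ⟪H, Jstar k⟫ + χ k * ‖Jstar k - Jp k‖
        ≤ U k J - ⟪H, J⟫ + χ k * ‖J - Jp k‖)
    (B : E) (hB : B = μ₀ • H + ∑ k, Jstar k) :
    (∀ Js : Fin N → E,
      1 / (2 * μ₀) * ‖B - ∑ k, Jstar k‖ ^ 2
          + ∑ k, (U k (Jstar k) + χ k * ‖Jstar k - Jp k‖)
        ≤ 1 / (2 * μ₀) * ‖B - ∑ k, Js k‖ ^ 2
          + ∑ k, (U k (Js k) + χ k * ‖Js k - Jp k‖)) ∧
    (∀ Js' : Fin N → E,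
      (∀ Js : Fin N → E,
        1 / (2 * μ₀) * ‖B - ∑ k, Js' k‖ ^ 2
            + ∑ k, (U k (Js' k) + χ k * ‖Js' k - Jp k‖)
          ≤ 1 / (2 * μ₀) * ‖B - ∑ k, Js k‖ ^ 2
            + ∑ k, (U k (Js k) + χ k * ‖Js k - Jp k‖)) → Js' = Jstar) ∧
    H = (1 / μ₀) • (B - ∑ k, Jstar k) := by
  set g : Fin N → E → ℝ := fun k J => U k J - ⟪H, J⟫ + χ k * ‖J - Jp k‖ with hg
  have hμne : μ₀ ≠ 0 := hμ₀.ne'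
  have hBJstar : B - ∑ k, Jstar k = μ₀ • H := by rw [hB]; abel
  -- key identity
  have key : ∀ Js : Fin N → E,
      1 / (2 * μ₀) * ‖B - ∑ k, Js k‖ ^ 2 + ∑ k, (U k (Js k) + χ k * ‖Js k - Jp k‖)
        = (1 / (2 * μ₀) * ‖B - ∑ k, Jstar k‖ ^ 2
            + ∑ k, (U k (Jstar k) + χ k * ‖Jstar k - Jp k‖))
          + (∑ k, (g k (Js k) - g k (Jstar k)))
          + ‖∑ k, (Jstar k - Js k)‖ ^ 2 / (2 * μ₀) := by
    intro Js
    have hd : B - ∑ k, Js k = μ₀ • H + ∑ k, (Jstar k - Js k) := by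
      rw [hB, Finset.sum_sub_distrib]; abel
    set d : E := ∑ k, (Jstar k - Js k) with hdd
    have hnorm1 : ‖B - ∑ k, Jstar k‖ ^ 2 = μ₀ ^ 2 * ‖H‖ ^ 2 := by
      rw [hBJstar, norm_smul, Real.norm_of_nonneg hμ₀.le, mul_pow]
    have hnorm2 : ‖B - ∑ k, Js k‖ ^ 2
        = μ₀ ^ 2 * ‖H‖ ^ 2 + 2 * μ₀ * ⟪H, d⟫ + ‖d‖ ^ 2 := by
      rw [hd, norm_add_sq_real, norm_smul, Real.norm_of_nonneg hμ₀.le, mul_pow,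
        real_inner_smul_left]
      ring
    have hc : ⟪H, d⟫ = ∑ k, (⟪H, Jstar k⟫ - ⟪H, Js k⟫) := by
      rw [hdd, inner_sum]
      exact Finset.sum_congr rfl fun k _ => inner_sub_right H _ _
    have hsplit : (∑ k, (g k (Js k) - g k (Jstar k)))
        = (∑ k, (U k (Js k) + χ k * ‖Js k - Jp k‖))
          - (∑ k, (U k (Jstar k) + χ k * ‖Jstar k - Jp k‖))
          + ∑ k, (⟪H, Jstar k⟫ - ⟪H, Js k⟫) := by
      rw [← Finset.sum_sub_distrib, ← Finset.sum_add_distrib]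
      exact Finset.sum_congr rfl fun k _ => by simp only [hg]; ring
    rw [hnorm1, hnorm2, hc, hsplit]
    field_simp
    ring
  have hgmin : ∀ k, ∀ J, g k (Jstar k) ≤ g k J := fun k J => hJstar k J
  -- strict convexity of each g k
  have hgstrict : ∀ k, StrictConvexOn ℝ Set.univ (g k) := by
    intro k
    have h1 : StrictConvexOn ℝ Set.univ (U k) := (hUconv k).strictConvexOn (hm k)
    have h2 : ConvexOn ℝ Set.univ (fun J : E => -⟪H, J⟫ + χ k * ‖J - Jp k‖) := by
      have := (neg_inner_convexOn (E := E) H).add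
        ((norm_sub_const_convexOn (E := E) (Jp k)).smul (hχ k))
      convert this using 2 with J
      all_goals rfl
    have h3 := h1.add_convexOn h2
    have heq : g k = fun J => U k J + (-⟪H, J⟫ + χ k * ‖J - Jp k‖) := by
      funext J; simp only [hg]; ring
    rw [heq]
    exact h3
  refine ⟨?_, ?_, ?_⟩
  · intro Js
    rw [key Js]
    have h1 : (0:ℝ) ≤ ∑ k, (g k (Js k) - g k (Jstar k)) :=
      Finset.sum_nonneg fun k _ => sub_nonneg.mpr (hgmin k (Js k))
    have h2 : (0:ℝ) ≤ ‖∑ k, (Jstar k - Js k)‖ ^ 2 / (2 * μ₀) := by positivity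
    linarith
  · intro Js' hJs'
    have h0 := hJs' Jstar
    rw [key Js'] at h0
    have hq : (0:ℝ) ≤ ‖∑ k, (Jstar k - Js' k)‖ ^ 2 / (2 * μ₀) := by positivity
    have hsn : ∀ k ∈ Finset.univ, (0:ℝ) ≤ g k (Js' k) - g k (Jstar k) :=
      fun k _ => sub_nonneg.mpr (hgmin k (Js' k))
    have hs0 : (∑ k, (g k (Js' k) - g k (Jstar k))) = 0 := by
      have h1 : (0:ℝ) ≤ ∑ k, (g k (Js' k) - g k (Jstar k)) := Finset.sum_nonneg hsn
      linarith
    have heach := (Finset.sum_eq_zero_iff_of_nonneg hsn).mp hs0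
    funext k
    have hk : g k (Js' k) = g k (Jstar k) := by
      have := heach k (Finset.mem_univ k); linarith [this]
    refine strict_min_unique (hgstrict k) (fun x => ?_) (hgmin k)
    rw [hk]; exact hgmin k x
  · rw [hBJstar, smul_smul, one_div, inv_mul_cancel₀ hμne, one_smul]
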